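/- Let q, t > 1 be real numbers and k ≥ 1 an integer. For every partition λ of k one has Σ_{ν⊢k} M(λ,ν) = 1, and M(λ,ν) > 0 for every partition ν of k; that is, M is a strictly positive stochastic matrix on the partitions of k. -/

import Mathlib

open Finset

/-- `z_λ = ∏_i i^{a_i(λ)} a_i(λ)!` for a multiset of parts. -/
def zWeight (m : Multiset ℕ) : ℕ :=
  ∏ i ∈ m.toFinset, i ^ m.count i * (m.count i).factorial

/-- `(x,y)_k = ∏_{i=0}^{k-1} (1 - x y^i)`. -/
noncomputable def poch (x y : ℝ) (k : ℕ) : ℝ :=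
  ∏ i ∈ Finset.range k, (1 - x * y ^ i)

/-- The measure `π_{q,t}` on partitions of `k`. -/
noncomputable def piQT (q t : ℝ) (k : ℕ) (l : Nat.Partition k) : ℝ :=
  (poch q q k / poch t q k) * ((zWeight l.parts : ℝ))⁻¹ *
    (l.parts.map (fun p => (1 - t ^ p) / (1 - q ^ p))).prod

/-- `π_{∞,t}` evaluated on a multiset of parts. -/
noncomputable def piInf (t : ℝ) (m : Multiset ℕ) : ℝ :=
  (t / (t - 1)) * ((zWeight m : ℝ))⁻¹ * (m.map (fun p => 1 - t⁻¹ ^ p)).prod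

/-- The weight `w_λ(κ)` of choosing the sub-multiset `κ` of kept parts. -/
noncomputable def wKeep (q : ℝ) (k : ℕ) (l κ : Multiset ℕ) : ℝ :=
  (q ^ k - 1)⁻¹ * ∏ i ∈ Finset.Icc 1 k,
    (Nat.choose (l.count i) (κ.count i) : ℝ) * (q ^ i - 1) ^ (l.count i - κ.count i)

/-- The auxiliary variables Markov kernel on partitions of `k`. -/
noncomputable def auxM (q t : ℝ) (k : ℕ) (l ν : Nat.Partition k) : ℝ :=
  ∑ κ ∈ l.parts.powerset.toFinset.filter (fun κ => κ ≤ ν.parts ∧ κ ≠ l.parts),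
    wKeep q k l.parts κ * piInf t (ν.parts - κ)

/-! ### Auxiliary lemmas -/

lemma zWeight_eq_prod (m : Multiset ℕ) (s : Finset ℕ) (h : m.toFinset ⊆ s) :
    zWeight m = ∏ i ∈ s, i ^ m.count i * (m.count i).factorial := by
  rw [zWeight]
  refine Finset.prod_subset h (fun i _ hi => ?_)
  rw [Multiset.count_eq_zero_of_notMem (by simpa using hi)]
  simp

lemma zWeight_pos {m : Multiset ℕ} (hm : ∀ p ∈ m, 0 < p) : 0 < zWeight m := by
  refine Finset.prod_pos (fun i hi => ?_)
  have := hm i (Multiset.mem_toFinset.mp hi)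
  positivity

lemma zWeight_erase {m : Multiset ℕ} {r : ℕ} (hr : r ∈ m) :
    zWeight m = r * m.count r * zWeight (m.erase r) := by
  have hsub : (m.erase r).toFinset ⊆ m.toFinset :=
    Multiset.toFinset_subset.mpr (fun x hx => Multiset.mem_of_mem_erase hx)
  rw [zWeight_eq_prod (m.erase r) m.toFinset hsub, zWeight]
  have hrm : r ∈ m.toFinset := Multiset.mem_toFinset.mpr hr
  rw [← Finset.mul_prod_erase _ _ hrm, ← Finset.mul_prod_erase _ _ hrm]
  have h1 : ∀ i ∈ m.toFinset.erase r,
      i ^ m.count i * (m.count i).factorial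
        = i ^ (m.erase r).count i * ((m.erase r).count i).factorial := by
    intro i hi
    rw [Multiset.count_erase_of_ne (Finset.ne_of_mem_erase hi)]
  rw [Finset.prod_congr rfl h1]
  have hc : m.count r = (m.erase r).count r + 1 := by
    have : 0 < m.count r := Multiset.count_pos.mpr hr
    rw [Multiset.count_erase_self]
    omega
  rw [hc, Nat.factorial_succ, pow_succ]
  ring

lemma count_powerset (l : Multiset ℕ) : ∀ (κ : Multiset ℕ) (s : Finset ℕ),
    l.toFinset ⊆ s → κ.toFinset ⊆ s →
    (Multiset.powerset l).count κ = ∏ i ∈ s, (l.count i).choose (κ.count i) := by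
  induction l using Multiset.induction with
  | empty =>
    intro κ s _ hκ
    by_cases h : κ = 0
    · subst h; simp
    · obtain ⟨a, ha⟩ := Multiset.exists_mem_of_ne_zero h
      have has : a ∈ s := hκ (Multiset.mem_toFinset.mpr ha)
      rw [Finset.prod_eq_zero has]
      · simp [Multiset.powerset_zero, Multiset.count_singleton, h]
      · have : 0 < κ.count a := Multiset.count_pos.mpr ha
        simp [Nat.choose_eq_zero_of_lt this]
  | cons a t ih =>
    intro κ s hl hκ
    have has : a ∈ s := hl (by simp)
    have htl : t.toFinset ⊆ s := le_trans (Multiset.toFinset_subset.mpr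
      (fun x hx => Multiset.mem_cons_of_mem hx)) hl
    rw [Multiset.powerset_cons, Multiset.count_add]
    have hmap : (Multiset.map (Multiset.cons a) t.powerset).count κ
        = if a ∈ κ then t.powerset.count (κ.erase a) else 0 := by
      split_ifs with h
      · rw [← Multiset.cons_erase h]
        rw [Multiset.count_map_eq_count' _ _ (fun x y hxy => by
          simpa using (Multiset.cons_inj_right a).mp hxy)]
        rw [Multiset.erase_cons_head]
      · rw [Multiset.count_eq_zero]
        intro hmem
        obtain ⟨x, _, hx⟩ := Multiset.mem_map.mp hmem
        exact h (hx ▸ Multiset.mem_cons_self a x)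
    rw [hmap, ← Finset.mul_prod_erase _ _ has]
    have hprodeq : ∀ i ∈ s.erase a, (t.count i).choose (κ.count i)
        = ((a ::ₘ t).count i).choose (κ.count i) := by
      intro i hi
      rw [Multiset.count_cons_of_ne (Finset.ne_of_mem_erase hi)]
    by_cases h : a ∈ κ
    · simp only [h, if_true]
      rw [ih κ s htl hκ, ih (κ.erase a) s htl (le_trans (Multiset.toFinset_subset.mpr
        (fun x hx => Multiset.mem_of_mem_erase hx)) hκ)]
      rw [← Finset.mul_prod_erase s (fun i => (t.count i).choose (κ.count i)) has,
        ← Finset.mul_prod_erase s (fun i => (t.count i).choose ((κ.erase a).count i)) has]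
      have hpe2 : ∀ i ∈ s.erase a, (t.count i).choose ((κ.erase a).count i)
          = ((a ::ₘ t).count i).choose (κ.count i) := by
        intro i hi
        rw [Multiset.count_erase_of_ne (Finset.ne_of_mem_erase hi),
          Multiset.count_cons_of_ne (Finset.ne_of_mem_erase hi)]
      rw [Finset.prod_congr rfl hprodeq, Finset.prod_congr rfl hpe2, ← add_mul]
      congr 1
      have hc : 0 < κ.count a := Multiset.count_pos.mpr h
      rw [Multiset.count_erase_self, Multiset.count_cons_self]
      rcases Nat.exists_eq_succ_of_ne_zero hc.ne' with ⟨c, hcc⟩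
      rw [hcc]
      simp [Nat.choose_succ_succ, Nat.add_comm]
    · simp only [h, if_false, add_zero]
      rw [ih κ s htl hκ,
        ← Finset.mul_prod_erase s (fun i => (t.count i).choose (κ.count i)) has,
        Finset.prod_congr rfl hprodeq]
      congr 1
      rw [Multiset.count_eq_zero_of_notMem h, Multiset.count_cons_self]
      simp

lemma sum_powerset_map_prod (f : ℕ → ℝ) (l : Multiset ℕ) :
    ((l.powerset.map (fun κ => (κ.map f).prod)).sum) = (l.map (fun p => 1 + f p)).prod := by
  induction l using Multiset.induction with
  | empty => simp
  | cons a t ih =>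
    rw [Multiset.powerset_cons, Multiset.map_add, Multiset.sum_add, ih,
      Multiset.map_map, Multiset.map_cons, Multiset.prod_cons]
    have h1 : Multiset.map ((fun κ => (Multiset.map f κ).prod) ∘ Multiset.cons a) t.powerset
        = Multiset.map (fun κ => f a * (Multiset.map f κ).prod) t.powerset :=
      Multiset.map_congr rfl (fun κ _ => by simp [Multiset.prod_cons])
    rw [h1, Multiset.sum_map_mul_left, ih]
    ring

lemma prod_map_pow_sum (q : ℝ) (l : Multiset ℕ) :
    (l.map (fun p => q ^ p)).prod = q ^ l.sum := by
  induction l using Multiset.induction with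
  | empty => simp
  | cons a t ih => simp [Multiset.prod_cons, ih, pow_add]

lemma toFinset_subset_Icc {l : Multiset ℕ} {k : ℕ} (hpos : ∀ p ∈ l, 0 < p)
    (hsum : l.sum = k) : l.toFinset ⊆ Finset.Icc 1 k := by
  intro p hp
  have hp' := Multiset.mem_toFinset.mp hp
  have h1 : p ≤ l.sum := Multiset.single_le_sum (fun x _ => Nat.zero_le x) p hp'
  exact Finset.mem_Icc.mpr ⟨hpos p hp', hsum ▸ h1⟩

lemma sum_choose_weight (q : ℝ) (hq : 1 < q) (k : ℕ) (l : Multiset ℕ)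
    (hpos : ∀ p ∈ l, 0 < p) (hsum : l.sum = k) :
    ∑ κ ∈ l.powerset.toFinset, ∏ i ∈ Finset.Icc 1 k,
      ((l.count i).choose (κ.count i) : ℝ) * (q ^ i - 1) ^ (l.count i - κ.count i)
    = q ^ k := by
  have hls : l.toFinset ⊆ Finset.Icc 1 k := toFinset_subset_Icc hpos hsum
  have hne : ∀ i ∈ Finset.Icc 1 k, (0:ℝ) < q ^ i - 1 := by
    intro i hi
    have hi1 : 1 ≤ i := (Finset.mem_Icc.mp hi).1
    have h1 : (1:ℝ) < q ^ i := one_lt_pow₀ hq (by omega)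
    linarith
  set g : ℕ → ℝ := fun p => q ^ p - 1 with hg
  set L : ℝ := (l.map g).prod with hL
  have step1 : ∀ κ ∈ l.powerset.toFinset,
      (∏ i ∈ Finset.Icc 1 k,
        ((l.count i).choose (κ.count i) : ℝ) * (q ^ i - 1) ^ (l.count i - κ.count i))
      = ((l.powerset.count κ : ℝ)) * (L * (κ.map (fun p => (g p)⁻¹)).prod) := by
    intro κ hκ
    have hκl : κ ≤ l := by
      rw [← Multiset.mem_powerset]; exact Multiset.mem_toFinset.mp hκ
    have hκs : κ.toFinset ⊆ Finset.Icc 1 k :=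
      le_trans (Multiset.toFinset_subset.mpr (fun x hx => Multiset.mem_of_le hκl hx)) hls
    rw [Finset.prod_mul_distrib]
    congr 1
    · rw [count_powerset l κ _ hls hκs, Nat.cast_prod]
    · have hsplit : ∀ i ∈ Finset.Icc 1 k,
          (q ^ i - 1) ^ (l.count i - κ.count i) = g i ^ l.count i * ((g i)⁻¹) ^ κ.count i := by
        intro i hi
        have hcle : κ.count i ≤ l.count i := Multiset.le_iff_count.mp hκl i
        rw [pow_sub₀ _ (ne_of_gt (hne i hi)) hcle, ← inv_pow]
      rw [Finset.prod_congr rfl hsplit, Finset.prod_mul_distrib]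
      congr 1
      · rw [hL, Finset.prod_multiset_map_count]
        exact (Finset.prod_subset hls (fun i _ hi => by
          rw [Multiset.count_eq_zero_of_notMem (by simpa using hi), pow_zero])).symm
      · rw [Finset.prod_multiset_map_count]
        exact (Finset.prod_subset hκs (fun i _ hi => by
          rw [Multiset.count_eq_zero_of_notMem (by simpa using hi), pow_zero])).symm
  rw [Finset.sum_congr rfl step1]
  have step2 : ∑ κ ∈ l.powerset.toFinset,
      ((l.powerset.count κ : ℝ)) * (L * (κ.map (fun p => (g p)⁻¹)).prod)
      = (l.powerset.map (fun κ => L * (κ.map (fun p => (g p)⁻¹)).prod)).sum := by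
    rw [Finset.sum_multiset_map_count]
    exact Finset.sum_congr rfl (fun κ _ => by rw [nsmul_eq_mul])
  rw [step2, Multiset.sum_map_mul_left, sum_powerset_map_prod]
  have : (Multiset.map (fun p => 1 + (g p)⁻¹) l).prod * L = q ^ k := by
    rw [hL, ← Multiset.prod_map_mul, ← hsum, ← prod_map_pow_sum q l]
    congr 1
    apply Multiset.map_congr rfl
    intro p hp
    have hp1 : (0:ℝ) < g p := hne p (hls (Multiset.mem_toFinset.mpr hp))
    field_simp [hg]
    simp [hg]
  rw [← this]
  ring

lemma sum_partition_sub (k : ℕ) (κ : Multiset ℕ) (hpos : ∀ p ∈ κ, 0 < p) (hκ : κ.sum ≤ k)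
    (G : Multiset ℕ → ℝ) :
    ∑ ν ∈ Finset.univ.filter (fun ν : Nat.Partition k => κ ≤ ν.parts), G (ν.parts - κ)
    = ∑ μ : Nat.Partition (k - κ.sum), G μ.parts := by
  refine Finset.sum_bij' (fun ν hν => ⟨ν.parts - κ, ?_, ?_⟩)
    (fun μ _ => ⟨μ.parts + κ, ?_, ?_⟩) ?_ ?_ ?_ ?_ ?_
  · intro i hi
    exact ν.parts_pos (Multiset.mem_of_le (tsub_le_self) hi)
  · have hle : κ ≤ ν.parts := (Finset.mem_filter.mp hν).2
    have := Multiset.sum_add (ν.parts - κ) κ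
    rw [tsub_add_cancel_of_le hle] at this
    rw [ν.parts_sum] at this
    omega
  · intro i hi
    rcases Multiset.mem_add.mp hi with h | h
    · exact μ.parts_pos h
    · exact hpos i h
  · rw [Multiset.sum_add, μ.parts_sum]
    omega
  · intro ν hν
    exact Finset.mem_univ _
  · intro μ hμ
    simp only [Finset.mem_filter, Finset.mem_univ, true_and]
    exact Multiset.le_add_left _ _
  · intro ν hν
    have hle : κ ≤ ν.parts := (Finset.mem_filter.mp hν).2
    ext1
    simp [tsub_add_cancel_of_le hle]
  · intro μ hμ
    ext1
    simp
  · intro ν hν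
    rfl

noncomputable def gF (t : ℝ) (m : Multiset ℕ) : ℝ :=
  ((zWeight m : ℝ))⁻¹ * (m.map (fun p => 1 - t⁻¹ ^ p)).prod

lemma parts_eq_zero (μ : Nat.Partition 0) : μ.parts = 0 := by
  by_contra h
  obtain ⟨a, ha⟩ := Multiset.exists_mem_of_ne_zero h
  have h1 := μ.parts_pos ha
  have h2 := Multiset.single_le_sum (fun x _ => Nat.zero_le x) a ha
  rw [μ.parts_sum] at h2
  omega

lemma gF_zero (t : ℝ) : (∑ μ : Nat.Partition 0, gF t μ.parts) = 1 := by
  have h : ∀ μ : Nat.Partition 0, gF t μ.parts = 1 := by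
    intro μ
    rw [parts_eq_zero μ]
    simp [gF, zWeight]
  rw [Finset.sum_congr rfl (fun μ _ => h μ), Finset.sum_const, Finset.card_univ]
  simp

lemma gF_step (t : ℝ) {m : Multiset ℕ} (hm : ∀ p ∈ m, 0 < p) {r : ℕ} (hr : r ∈ m) :
    ((r : ℝ) * m.count r) * gF t m = (1 - t⁻¹ ^ r) * gF t (m.erase r) := by
  have herase : ∀ p ∈ m.erase r, 0 < p := fun p hp => hm p (Multiset.mem_of_mem_erase hp)
  have hz : (zWeight (m.erase r) : ℝ) ≠ 0 := Nat.cast_ne_zero.mpr (zWeight_pos herase).ne'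
  have hzm := zWeight_erase hr
  have hprod : (m.map (fun p => 1 - t⁻¹ ^ p)).prod
      = (1 - t⁻¹ ^ r) * ((m.erase r).map (fun p => 1 - t⁻¹ ^ p)).prod := by
    conv_lhs => rw [← Multiset.cons_erase hr]
    rw [Multiset.map_cons, Multiset.prod_cons]
  rw [gF, gF, hzm, hprod]
  have hr0 : (0:ℝ) < (r:ℝ) := Nat.cast_pos.mpr (hm r hr)
  have hc0 : (0:ℝ) < (m.count r : ℝ) := Nat.cast_pos.mpr (Multiset.count_pos.mpr hr)
  push_cast
  field_simp

lemma Tg_rec (t : ℝ) (n : ℕ) (hn : 1 ≤ n) :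
    (n : ℝ) * (∑ μ : Nat.Partition n, gF t μ.parts)
    = ∑ r ∈ Finset.Icc 1 n, (1 - t⁻¹ ^ r) * ∑ μ : Nat.Partition (n - r), gF t μ.parts := by
  rw [Finset.mul_sum]
  have hterm : ∀ μ : Nat.Partition n, (n:ℝ) * gF t μ.parts
      = ∑ r ∈ Finset.Icc 1 n,
        (if r ∈ μ.parts then (1 - t⁻¹ ^ r) * gF t (μ.parts.erase r) else 0) := by
    intro μ
    have hsub : μ.parts.toFinset ⊆ Finset.Icc 1 n :=
      toFinset_subset_Icc (fun p hp => μ.parts_pos hp) μ.parts_sum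
    rw [← Finset.sum_subset hsub (fun r _ hr => by
      rw [if_neg (fun h => hr (Multiset.mem_toFinset.mpr h))])]
    have hcong : ∀ r ∈ μ.parts.toFinset,
        (if r ∈ μ.parts then (1 - t⁻¹ ^ r) * gF t (μ.parts.erase r) else 0)
        = ((r:ℝ) * μ.parts.count r) * gF t μ.parts := by
      intro r hr
      have hrm : r ∈ μ.parts := Multiset.mem_toFinset.mp hr
      rw [if_pos hrm, ← gF_step t (fun p hp => μ.parts_pos hp) hrm]
    rw [Finset.sum_congr rfl hcong, ← Finset.sum_mul]
    congr 1
    have h0 : ∑ r ∈ μ.parts.toFinset, μ.parts.count r * r = n := by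
      conv_rhs => rw [← μ.parts_sum]
      conv_rhs => rw [show μ.parts = Multiset.map id μ.parts from (Multiset.map_id μ.parts).symm]
      rw [Finset.sum_multiset_map_count]
      simp [smul_eq_mul]
    have h0' : ((∑ r ∈ μ.parts.toFinset, Multiset.count r μ.parts * r : ℕ) : ℝ) = (n:ℝ) := by
      exact_mod_cast congrArg (Nat.cast : ℕ → ℝ) h0
    rw [← h0']
    push_cast
    exact Finset.sum_congr rfl (fun r _ => by ring)
  rw [Finset.sum_congr rfl (fun μ _ => hterm μ), Finset.sum_comm]
  refine Finset.sum_congr rfl (fun r hr => ?_)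
  obtain ⟨hr1, hrn⟩ := Finset.mem_Icc.mp hr
  rw [← Finset.sum_filter]
  have hfilt : Finset.univ.filter (fun μ : Nat.Partition n => r ∈ μ.parts)
      = Finset.univ.filter (fun μ : Nat.Partition n => ({r} : Multiset ℕ) ≤ μ.parts) := by
    apply Finset.filter_congr
    intro μ _
    simp [Multiset.singleton_le]
  have hcong2 : ∀ μ ∈ Finset.univ.filter
      (fun μ : Nat.Partition n => ({r} : Multiset ℕ) ≤ μ.parts),
      (1 - t⁻¹ ^ r) * gF t (μ.parts.erase r) = (1 - t⁻¹ ^ r) * gF t (μ.parts - {r}) := by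
    intro μ _
    rw [Multiset.sub_singleton]
  rw [hfilt, Finset.sum_congr rfl hcong2, ← Finset.mul_sum]
  congr 1
  have h3 := sum_partition_sub n {r} (by
      intro p hp
      rw [Multiset.mem_singleton.mp hp]
      omega)
    (by simp [hrn]) (gF t)
  rw [Multiset.sum_singleton] at h3
  exact h3

lemma Tg_eq (t : ℝ) (ht : 1 < t) : ∀ n : ℕ, 1 ≤ n →
    (∑ μ : Nat.Partition n, gF t μ.parts) = 1 - t⁻¹ := by
  intro n
  induction n using Nat.strong_induction_on with
  | _ n ih =>
    intro hn
    set u := t⁻¹ with hu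
    have hrec := Tg_rec t n hn
    have hn0 : ((n:ℝ)) ≠ 0 := Nat.cast_ne_zero.mpr (by omega)
    have hRHS : ∑ r ∈ Finset.Icc 1 n, (1 - u ^ r) * (∑ μ : Nat.Partition (n-r), gF t μ.parts)
        = (n:ℝ) * (1 - u) := by
      have hsplit : Finset.Icc 1 n = insert n (Finset.Icc 1 (n-1)) := by
        ext x
        simp only [Finset.mem_Icc, Finset.mem_insert]
        omega
      rw [hsplit, Finset.sum_insert (by simp only [Finset.mem_Icc]; omega)]
      have hT0 : (∑ μ : Nat.Partition (n - n), gF t μ.parts) = 1 := by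
        rw [Nat.sub_self]
        exact gF_zero t
      have hIH : ∀ r ∈ Finset.Icc 1 (n-1),
          (1 - u ^ r) * (∑ μ : Nat.Partition (n-r), gF t μ.parts)
            = (1 - u ^ r) * (1 - u) := by
        intro r hr
        obtain ⟨h1, h2⟩ := Finset.mem_Icc.mp hr
        rw [ih (n - r) (by omega) (by omega)]
      rw [hT0, Finset.sum_congr rfl hIH, mul_one]
      have hins : Finset.range n = insert 0 (Finset.Icc 1 (n-1)) := by
        ext x
        simp only [Finset.mem_range, Finset.mem_insert, Finset.mem_Icc]
        omega
      have hg := geom_sum_mul u n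
      rw [hins, Finset.sum_insert (by simp)] at hg
      have hgeom2 : (1 - u) * (∑ r ∈ Finset.Icc 1 (n-1), u ^ r) = u - u ^ n := by
        linear_combination -hg
      have hcard : ((Finset.Icc 1 (n-1)).card : ℝ) = (n:ℝ) - 1 := by
        rw [Nat.card_Icc]
        have h9 : n - 1 + 1 - 1 = n - 1 := by omega
        rw [h9, Nat.cast_sub hn]
        simp
      have hexp : ∀ r ∈ Finset.Icc 1 (n-1), (1 - u ^ r) * (1 - u)
          = (1 - u) - u ^ r * (1 - u) := fun r _ => by ring
      rw [Finset.sum_congr rfl hexp, Finset.sum_sub_distrib, Finset.sum_const,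
        ← Finset.sum_mul, nsmul_eq_mul, hcard]
      linear_combination -hgeom2
    rw [hRHS] at hrec
    exact mul_left_cancel₀ hn0 hrec

lemma piInf_sum (t : ℝ) (ht : 1 < t) (n : ℕ) (hn : 1 ≤ n) :
    (∑ μ : Nat.Partition n, piInf t μ.parts) = 1 := by
  have h1 : ∀ μ : Nat.Partition n, piInf t μ.parts = (t / (t-1)) * gF t μ.parts := by
    intro μ
    rw [piInf, gF]
    ring
  rw [Finset.sum_congr rfl (fun μ _ => h1 μ), ← Finset.mul_sum, Tg_eq t ht n hn]
  have ht0 : t ≠ 0 := by linarith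
  have ht1 : t - 1 ≠ 0 := by intro h; nlinarith
  field_simp

lemma multiset_prod_pos {m : Multiset ℝ} (h : ∀ x ∈ m, 0 < x) : 0 < m.prod := by
  induction m using Multiset.induction with
  | empty => simp
  | cons a s ih =>
    rw [Multiset.prod_cons]
    exact mul_pos (h a (Multiset.mem_cons_self a s))
      (ih (fun x hx => h x (Multiset.mem_cons_of_mem hx)))

lemma piInf_pos {t : ℝ} (ht : 1 < t) {m : Multiset ℕ} (hm : ∀ p ∈ m, 0 < p) :
    0 < piInf t m := by
  rw [piInf]
  apply mul_pos (mul_pos (div_pos (by linarith) (by linarith))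
    (inv_pos.mpr (Nat.cast_pos.mpr (zWeight_pos hm))))
  apply multiset_prod_pos
  intro x hx
  obtain ⟨p, hp, rfl⟩ := Multiset.mem_map.mp hx
  have hppos : 0 < p := hm p hp
  have h1 : t⁻¹ ^ p < 1 := pow_lt_one₀ (by positivity) (inv_lt_one_of_one_lt₀ ht) (by omega)
  linarith

/-- The auxiliary variables kernel is a strictly positive stochastic matrix. -/
theorem auxM_stochastic_pos
    (q t : ℝ) (hq : 1 < q) (ht : 1 < t) (k : ℕ) (hk : 1 ≤ k) :
    ∀ l : Nat.Partition k,
      (∑ ν : Nat.Partition k, auxM q t k l ν) = 1 ∧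
      (∀ ν : Nat.Partition k, 0 < auxM q t k l ν) := by
  intro l
  have hqk : (0:ℝ) < q ^ k - 1 := by
    have := one_lt_pow₀ hq (by omega : k ≠ 0)
    linarith
  have hlpos : ∀ p ∈ l.parts, 0 < p := fun p hp => l.parts_pos hp
  have hP : ∀ κ ∈ l.parts.powerset.toFinset, κ ≤ l.parts := fun κ hκ =>
    Multiset.mem_powerset.mp (Multiset.mem_toFinset.mp hκ)
  have hwpos : ∀ κ ∈ l.parts.powerset.toFinset, 0 < wKeep q k l.parts κ := by
    intro κ hκ
    apply mul_pos (inv_pos.mpr hqk)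
    apply Finset.prod_pos
    intro i hi
    have hcle : κ.count i ≤ l.parts.count i := Multiset.le_iff_count.mp (hP κ hκ) i
    apply mul_pos
    · exact_mod_cast Nat.choose_pos hcle
    · apply pow_pos
      have hi1 : 1 ≤ i := (Finset.mem_Icc.mp hi).1
      have : (1:ℝ) < q ^ i := one_lt_pow₀ hq (by omega)
      linarith
  constructor
  · -- stochasticity
    have hswap : (∑ ν : Nat.Partition k, auxM q t k l ν)
        = ∑ κ ∈ l.parts.powerset.toFinset, ∑ ν : Nat.Partition k,
            (if κ ≤ ν.parts ∧ κ ≠ l.parts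
              then wKeep q k l.parts κ * piInf t (ν.parts - κ) else 0) := by
      rw [show (fun ν : Nat.Partition k => auxM q t k l ν)
          = fun ν : Nat.Partition k => ∑ κ ∈ l.parts.powerset.toFinset,
              (if κ ≤ ν.parts ∧ κ ≠ l.parts
                then wKeep q k l.parts κ * piInf t (ν.parts - κ) else 0) from
        funext (fun ν => by rw [auxM, Finset.sum_filter])]
      exact Finset.sum_comm
    rw [hswap]
    have hinner : ∀ κ ∈ l.parts.powerset.toFinset,
        (∑ ν : Nat.Partition k, if κ ≤ ν.parts ∧ κ ≠ l.parts
            then wKeep q k l.parts κ * piInf t (ν.parts - κ) else 0)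
        = if κ ≠ l.parts then wKeep q k l.parts κ else 0 := by
      intro κ hκ
      have hκl : κ ≤ l.parts := hP κ hκ
      by_cases hne : κ ≠ l.parts
      · rw [if_pos hne]
        have hiff : ∀ ν : Nat.Partition k,
            (if κ ≤ ν.parts ∧ κ ≠ l.parts
              then wKeep q k l.parts κ * piInf t (ν.parts - κ) else 0)
            = if κ ≤ ν.parts then wKeep q k l.parts κ * piInf t (ν.parts - κ) else 0 := by
          intro ν
          by_cases h : κ ≤ ν.parts <;> simp [h, hne]
        rw [Finset.sum_congr rfl (fun ν _ => hiff ν), ← Finset.sum_filter, ← Finset.mul_sum]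
        have hκpos : ∀ p ∈ κ, 0 < p := fun p hp => hlpos p (Multiset.mem_of_le hκl hp)
        have hκsum_lt : κ.sum < k := by
          have hd0 : l.parts - κ ≠ 0 := by
            intro h
            apply hne
            have h2 := tsub_add_cancel_of_le hκl
            rw [h, zero_add] at h2
            exact h2
          obtain ⟨a, ha⟩ := Multiset.exists_mem_of_ne_zero hd0
          have hapos : 0 < a := hlpos a (Multiset.mem_of_le tsub_le_self ha)
          have hale : a ≤ (l.parts - κ).sum :=
            Multiset.single_le_sum (fun x _ => Nat.zero_le x) a ha
          have hsum2 : (l.parts - κ).sum + κ.sum = k := by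
            rw [← Multiset.sum_add, tsub_add_cancel_of_le hκl, l.parts_sum]
          omega
        rw [sum_partition_sub k κ hκpos (le_of_lt hκsum_lt) (piInf t),
          piInf_sum t ht (k - κ.sum) (by omega), mul_one]
      · push_neg at hne
        rw [if_neg (by simp [hne])]
        refine Finset.sum_eq_zero (fun ν _ => ?_)
        rw [if_neg (by simp [hne])]
    rw [Finset.sum_congr rfl hinner]
    have hlmem : l.parts ∈ l.parts.powerset.toFinset :=
      Multiset.mem_toFinset.mpr (Multiset.mem_powerset.mpr le_rfl)
    have hwl : wKeep q k l.parts l.parts = (q ^ k - 1)⁻¹ := by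
      rw [wKeep]
      have : ∀ i ∈ Finset.Icc 1 k,
          ((l.parts.count i).choose (l.parts.count i) : ℝ)
            * (q ^ i - 1) ^ (l.parts.count i - l.parts.count i) = 1 := by
        intro i _
        rw [Nat.choose_self, Nat.sub_self, pow_zero]
        simp
      rw [Finset.prod_congr rfl this, Finset.prod_const_one, mul_one]
    have hsumw : ∑ κ ∈ l.parts.powerset.toFinset, wKeep q k l.parts κ
        = (q ^ k - 1)⁻¹ * q ^ k := by
      rw [show (fun κ => wKeep q k l.parts κ)
          = fun κ => (q ^ k - 1)⁻¹ * ∏ i ∈ Finset.Icc 1 k,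
            ((l.parts.count i).choose (κ.count i) : ℝ)
              * (q ^ i - 1) ^ (l.parts.count i - κ.count i) from rfl]
      rw [← Finset.mul_sum, sum_choose_weight q hq k l.parts hlpos l.parts_sum]
    have hsplit : ∑ κ ∈ l.parts.powerset.toFinset,
        (if κ ≠ l.parts then wKeep q k l.parts κ else 0)
        = (∑ κ ∈ l.parts.powerset.toFinset, wKeep q k l.parts κ)
          - wKeep q k l.parts l.parts := by
      rw [← Finset.add_sum_erase _ _ hlmem,
        ← Finset.add_sum_erase _ (fun κ => wKeep q k l.parts κ) hlmem]
      rw [if_neg (by simp)]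
      have : ∀ κ ∈ l.parts.powerset.toFinset.erase l.parts,
          (if κ ≠ l.parts then wKeep q k l.parts κ else 0) = wKeep q k l.parts κ := by
        intro κ hκ
        rw [if_pos (Finset.ne_of_mem_erase hκ)]
      rw [Finset.sum_congr rfl this]
      ring
    rw [hsplit, hsumw, hwl]
    field_simp
  · -- positivity
    intro ν
    rw [auxM]
    apply Finset.sum_pos
    · intro κ hκ
      obtain ⟨hκP, hκν, hκne⟩ := Finset.mem_filter.mp hκ
      refine mul_pos (hwpos κ hκP) (piInf_pos ht (fun p hp => ?_))
      · exact ν.parts_pos (Multiset.mem_of_le tsub_le_self hp)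
    · refine ⟨0, Finset.mem_filter.mpr ⟨?_, ?_, ?_⟩⟩
      · exact Multiset.mem_toFinset.mpr (Multiset.mem_powerset.mpr (Multiset.zero_le _))
      · exact Multiset.zero_le _
      · intro h
        have := l.parts_sum
        rw [← h] at this
        simp at this
        omega
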